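/- Let m ≥ 2, 1 ≤ ℓ ≤ m, and let (f_1, …, f_ℓ) be a (2m, ℓ) bent vectorial function on GF(2^{2m}). Then the code C(f_1, …, f_ℓ) is spanned by its set of codewords of minimum Hamming weight 2^{2m−1} − 2^{m−1}. -/

import Mathlib

noncomputable section

/-- The finite field `GF(2^n)` is finite. -/
instance (n : ℕ) : Fintype (GaloisField 2 n) := Fintype.ofFinite _

/-- The absolute trace map from `GF(2^(2m))` to `GF(2)`. -/
def tr (m : ℕ) (x : GaloisField 2 (2*m)) : ZMod 2 :=
  Algebra.trace (ZMod 2) (GaloisField 2 (2*m)) x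

/-- A Boolean function `f : GF(2^(2m)) → GF(2)` is bent if all its Walsh
transform values have absolute value `2^m`. -/
def IsBent (m : ℕ) (f : GaloisField 2 (2*m) → ZMod 2) : Prop :=
  ∀ w : GaloisField 2 (2*m),
    |∑ x : GaloisField 2 (2*m), (-1 : ℤ) ^ ((f x + tr m (w * x)).val)| = 2 ^ m

/-- A tuple `(f 0, …, f (ℓ-1))` of Boolean functions on `GF(2^(2m))` is a
`(2m, ℓ)` bent vectorial function if every nonzero `GF(2)`-linear combination
of the `f j` is bent. -/
def IsBentVectorial (m ℓ : ℕ) (f : Fin ℓ → GaloisField 2 (2*m) → ZMod 2) : Prop :=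
  ∀ a : Fin ℓ → ZMod 2, a ≠ 0 → IsBent m (fun x => ∑ j, a j * f j x)

/-- The binary linear code `C(f 0, …, f (ℓ-1))` of length `2^(2m)` (with
coordinates indexed by `GF(2^(2m))`, a codeword being a function
`GF(2^(2m)) → GF(2)`, i.e. the truth table of a Boolean function), spanned by
the truth tables of the `f j`, the truth tables of the linear functions
`x ↦ tr (w * x)` for all `w`, and the all-one vector. -/
def code (m ℓ : ℕ) (f : Fin ℓ → GaloisField 2 (2*m) → ZMod 2) :
    Submodule (ZMod 2) (GaloisField 2 (2*m) → ZMod 2) :=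
  Submodule.span (ZMod 2)
    (Set.range f ∪ Set.range (fun w => fun x => tr m (w * x)) ∪ {fun _ => (1 : ZMod 2)})

/-- The Hamming weight of a codeword: the number of nonzero coordinates. -/
def wt (m : ℕ) (c : GaloisField 2 (2*m) → ZMod 2) : ℕ :=
  {x | c x ≠ 0}.ncard

/-- The support of a codeword: the set of coordinates where it is nonzero. -/
def supp (m : ℕ) (c : GaloisField 2 (2*m) → ZMod 2) : Set (GaloisField 2 (2*m)) :=
  {x | c x ≠ 0}

set_option synthInstance.maxHeartbeats 1000000 in
instance (n : ℕ) : Algebra.IsSeparable (ZMod 2) (GaloisField 2 n) := inferInstance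

namespace Stmt5Aux

abbrev Fq (m : ℕ) := GaloisField 2 (2*m)

variable {m : ℕ}

lemma card_Fq (hm : m ≠ 0) : (Fintype.card (Fq m)) = 2^(2*m) := by
  rw [← Nat.card_eq_fintype_card]; exact GaloisField.card 2 (2*m) (by omega)

lemma sign_add (a b : ZMod 2) : ((-1:ℤ))^((a+b).val) = (-1)^a.val * (-1)^b.val := by
  revert a b; decide

lemma tr_add (a b : Fq m) : tr m (a+b) = tr m a + tr m b := map_add _ a b
lemma tr_zero : tr m (0 : Fq m) = 0 := map_zero _

lemma char_sum_zero (hm : m ≠ 0) :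
    (∑ x : Fq m, ((-1:ℤ))^((tr m ((0:Fq m)*x)).val)) = 2^(2*m) := by
  simp only [zero_mul, tr_zero, ZMod.val_zero, pow_zero, Finset.sum_const, Finset.card_univ,
    nsmul_eq_mul, mul_one, card_Fq hm]
  push_cast; ring

lemma char_sum_ne {w : Fq m} (hw : w ≠ 0) :
    (∑ x : Fq m, ((-1:ℤ))^((tr m (w*x)).val)) = 0 := by
  obtain ⟨x0, hx0⟩ : ∃ x0, tr m (w * x0) = 1 := by
    by_contra hc
    push_neg at hc
    have h0 : ∀ x, tr m (w*x) = 0 := by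
      intro x
      have h1 := hc x
      revert h1
      generalize tr m (w*x) = z
      revert z; decide
    exact hw ((traceForm_nondegenerate (ZMod 2) (Fq m)).1 w
      (fun x => by simpa [tr, Algebra.traceForm_apply] using h0 x))
  have key : (∑ x : Fq m, ((-1:ℤ))^((tr m (w*x)).val))
      = -∑ x : Fq m, ((-1:ℤ))^((tr m (w*x)).val) := by
    conv_lhs => rw [← Equiv.sum_comp (Equiv.addRight x0)
      (fun x => ((-1:ℤ))^((tr m (w*x)).val))]
    rw [← Finset.sum_neg_distrib]
    apply Finset.sum_congr rfl
    intro x _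
    rw [show w * (Equiv.addRight x0) x = w * x + w * x0 by simp [Equiv.coe_addRight]; ring]
    rw [tr_add, sign_add, hx0]
    norm_num [ZMod.val_one]
  linarith




def S (m : ℕ) (g : Fq m → ZMod 2) (w : Fq m) : ℤ :=
  ∑ x : Fq m, (-1 : ℤ) ^ ((g x + tr m (w * x)).val)

def eps (m : ℕ) (g : Fq m → ZMod 2) (w : Fq m) : ZMod 2 :=
  if S m g w = 2^m then 0 else 1

lemma S_eq {g : Fq m → ZMod 2} (hg : IsBent m g) (w : Fq m) :
    S m g w = (-1:ℤ)^((eps m g w).val) * 2^m := by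
  have h := hg w
  rcases (abs_eq (by positivity : (0:ℤ) ≤ 2^m)).mp h with h1 | h1
  · have h1' : S m g w = 2^m := h1
    simp [eps, h1']
  · have h1' : S m g w = -2^m := h1
    have hne : S m g w ≠ 2^m := by
      rw [h1']; intro hc
      have : (0:ℤ) < 2^m := by positivity
      omega
    simp only [eps, h1']
    rw [if_neg (show ¬((-2^m : ℤ) = 2^m) by
      intro hc
      have : (0:ℤ) < 2^m := by positivity
      omega)]
    simp [ZMod.val_one]

lemma val_sign (v : ZMod 2) : ((-1:ℤ))^v.val = 1 - 2 * (v.val : ℤ) := by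
  revert v; decide

lemma val_eq_ite (v : ZMod 2) : (v.val : ℤ) = if v ≠ 0 then 1 else 0 := by
  revert v; decide

lemma wt_eq_sum (c : Fq m → ZMod 2) :
    ({x | c x ≠ 0}.ncard : ℤ) = ∑ x : Fq m, ((c x).val : ℤ) := by
  classical
  rw [Set.ncard_eq_toFinset_card']
  simp only [val_eq_ite]
  rw [Finset.sum_ite, Finset.sum_const, Finset.sum_const]
  simp [Set.toFinset_setOf]

lemma wt_of_S (hm : 2 ≤ m) (c : Fq m → ZMod 2)
    (h : (∑ x : Fq m, ((-1:ℤ))^((c x).val)) = 2^m) :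
    {x | c x ≠ 0}.ncard = 2^(2*m-1) - 2^(m-1) := by
  have h2 : (∑ x : Fq m, ((-1:ℤ))^((c x).val))
      = (Fintype.card (Fq m) : ℤ) - 2 * ∑ x : Fq m, ((c x).val : ℤ) := by
    simp only [val_sign]
    rw [Finset.sum_sub_distrib, Finset.sum_const, Finset.card_univ, ← Finset.mul_sum]
    push_cast; ring
  have hcard : (Fintype.card (Fq m) : ℤ) = 2^(2*m) := by
    rw [card_Fq (by omega)]; push_cast; ring
  have hle : (2:ℕ)^(m-1) ≤ 2^(2*m-1) := Nat.pow_le_pow_right (by norm_num) (by omega)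
  have e1 : (2:ℤ) * 2^(2*m-1) = 2^(2*m) := by
    rw [← pow_succ']; congr 1; omega
  have e2 : (2:ℤ) * 2^(m-1) = 2^m := by
    rw [← pow_succ']; congr 1; omega
  have := wt_eq_sum c
  have : ({x | c x ≠ 0}.ncard : ℤ) = ((2^(2*m-1) - 2^(m-1) : ℕ) : ℤ) := by
    push_cast [Nat.cast_sub hle]
    rw [wt_eq_sum c]
    rw [h2, hcard] at h
    linarith
  exact_mod_cast this



lemma zmod2_quad_zero (a b c d : ZMod 2) (h : ¬(a + b + c + d = 1)) : a + b + c + d = 0 := by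
  revert a b c d; decide

lemma exists_quad (hm : 2 ≤ m) (g : Fq m → ZMod 2) (hg : IsBent m g) :
    ∃ w1 w2 w3 w4 : Fq m, w1 + w2 + w3 + w4 = 0 ∧
      eps m g w1 + eps m g w2 + eps m g w3 + eps m g w4 = 1 := by
  by_contra hc
  push_neg at hc
  have hzero : ∀ w1 w2 w3 w4 : Fq m, w1 + w2 + w3 + w4 = 0 →
      eps m g w1 + eps m g w2 + eps m g w3 + eps m g w4 = 0 := by
    intro w1 w2 w3 w4 hw
    exact zmod2_quad_zero _ _ _ _ (hc w1 w2 w3 w4 hw)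
  set e := eps m g with he
  -- δ is additive
  have hzz : ∀ z : Fq m, z + z = 0 := fun z => CharTwo.add_self_eq_zero z
  have hadd : ∀ u v : Fq m, e (u+v) + e 0 = (e u + e 0) + (e v + e 0) := by
    intro u v
    have h4 := hzero (u+v) u v 0 (by
      rw [show u + v + u + v + 0 = (u + u) + (v + v) by ring, hzz, hzz, add_zero])
    revert h4
    generalize e (u+v) = a; generalize e u = b; generalize e v = c; generalize e 0 = d
    revert a b c d; decide
  let δ : Fq m →ₗ[ZMod 2] ZMod 2 :=
    AddMonoidHom.toZModLinearMap 2 (AddMonoidHom.mk' (fun x => e x + e 0) hadd)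
  obtain ⟨v, hv⟩ := ((Algebra.traceForm (ZMod 2) (Fq m)).toDual
    (traceForm_nondegenerate _ _)).surjective δ
  have hvx : ∀ x : Fq m, tr m (v * x) = e x + e 0 := by
    intro x
    have h1 := DFunLike.congr_fun hv x
    rw [LinearMap.BilinForm.toDual_def] at h1
    simpa [tr, Algebra.traceForm_apply, δ, AddMonoidHom.toZModLinearMap] using h1
  obtain ⟨x0, hx0⟩ := exists_ne (-v : Fq m)
  have hvx0 : v + x0 ≠ 0 := by
    intro h
    exact hx0 (eq_neg_of_add_eq_zero_right h)
  have hew : ∀ w : Fq m, e w = tr m (v * w) + e 0 := by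
    intro w
    have h1 := hvx w
    revert h1
    generalize tr m (v*w) = a; generalize e w = b; generalize e 0 = c
    revert a b c; decide
  -- the double sum
  set T : ℤ := ∑ w : Fq m, S m g w * (-1:ℤ)^((tr m (w * x0)).val) with hT
  have hL : T = (-1:ℤ)^((g (-x0)).val) * 2^(2*m) := by
    calc T = ∑ w : Fq m, ∑ x : Fq m,
          (-1:ℤ)^((g x).val) * (-1:ℤ)^((tr m (w*(x + x0))).val) := by
          rw [hT]
          apply Finset.sum_congr rfl; intro w _
          rw [S, Finset.sum_mul]
          apply Finset.sum_congr rfl; intro x _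
          rw [sign_add, show w*(x+x0) = w*x + w*x0 by ring, tr_add, sign_add]
          ring
      _ = ∑ x : Fq m, (-1:ℤ)^((g x).val)
            * ∑ w : Fq m, (-1:ℤ)^((tr m (w*(x + x0))).val) := by
          rw [Finset.sum_comm]
          apply Finset.sum_congr rfl; intro x _
          rw [Finset.mul_sum]
      _ = (-1:ℤ)^((g (-x0)).val) * 2^(2*m) := by
          rw [Fintype.sum_eq_single (-x0 : Fq m)]
          · congr 1
            rw [show (-x0 : Fq m) + x0 = 0 by ring]
            simpa using char_sum_zero (m := m) (by omega)
          · intro x hx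
            have hxu : x + x0 ≠ 0 := fun h => hx (eq_neg_of_add_eq_zero_left h)
            have : ∑ w : Fq m, (-1:ℤ)^((tr m (w*(x + x0))).val) = 0 := by
              rw [show (fun w => (-1:ℤ)^((tr m (w*(x + x0))).val))
                  = (fun w => (-1:ℤ)^((tr m ((x + x0)*w)).val)) by
                funext w; rw [mul_comm]]
              exact char_sum_ne hxu
            rw [this, mul_zero]
  have hR : T = 0 := by
    calc T = ∑ w : Fq m,
          ((-1:ℤ)^((e w).val) * 2^m) * (-1:ℤ)^((tr m (w * x0)).val) := by
          rw [hT]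
          exact Finset.sum_congr rfl fun w _ => by rw [S_eq hg w]
      _ = 2^m * ∑ w : Fq m, (-1:ℤ)^((tr m (w*(v + x0)) + e 0).val) := by
          rw [Finset.mul_sum]
          apply Finset.sum_congr rfl; intro w _
          rw [sign_add, hew w, sign_add,
            show w*(v+x0) = v*w + w*x0 by ring, tr_add, sign_add]
          ring
      _ = 0 := by
          have h1 : ∑ w : Fq m, (-1:ℤ)^((tr m (w*(v + x0)) + e 0).val)
              = (∑ w : Fq m, (-1:ℤ)^((tr m (w*(v + x0))).val)) * (-1:ℤ)^((e 0).val) := by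
            rw [Finset.sum_mul]
            exact Finset.sum_congr rfl fun w _ => sign_add _ _
          rw [h1, show (fun w => (-1:ℤ)^((tr m (w*(v + x0))).val))
              = (fun w => (-1:ℤ)^((tr m ((v + x0)*w)).val)) by
            funext w; rw [mul_comm]]
          rw [char_sum_ne hvx0]
          ring
  rw [hR] at hL
  rcases mul_eq_zero.mp hL.symm with h1 | h1
  · rcases Nat.even_or_odd ((g (-x0)).val) with h2 | h2
    · rw [Even.neg_one_pow h2] at h1; norm_num at h1
    · rw [Odd.neg_one_pow h2] at h1; norm_num at h1
  · have : (0:ℤ) < 2^(2*m) := by positivity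
    omega


lemma sign_sq (v : ZMod 2) : ((-1:ℤ))^v.val * ((-1:ℤ))^v.val = 1 := by revert v; decide

lemma S_word {g : Fq m → ZMod 2} (hg : IsBent m g) (w : Fq m) :
    (∑ x : Fq m, (-1:ℤ)^((g x + tr m (w*x) + eps m g w).val)) = 2^m := by
  have h1 : (∑ x : Fq m, (-1:ℤ)^((g x + tr m (w*x) + eps m g w).val))
      = S m g w * (-1:ℤ)^((eps m g w).val) := by
    rw [S, Finset.sum_mul]
    exact Finset.sum_congr rfl fun x _ => sign_add _ _
  rw [h1, S_eq hg w, mul_assoc, mul_comm ((2:ℤ)^m), ← mul_assoc, sign_sq, one_mul]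

lemma zmod2_four (a t1 t2 t3 t4 e1 e2 e3 e4 : ZMod 2) (ht : t1+t2+t3+t4 = 0)
    (hee : e1+e2+e3+e4 = 1) :
    (a+t1+e1)+(a+t2+e2)+(a+t3+e3)+(a+t4+e4) = 1 := by
  revert a t1 t2 t3 t4 e1 e2 e3 e4; decide

lemma zmod2_tr (a t e1 e0 : ZMod 2) : t = (a+t+e1)+(a+0+e0)+(e1+e0) := by
  revert a t e1 e0; decide

lemma zmod2_fj (a e : ZMod 2) : a = (a + 0 + e) + e := by revert a e; decide

end Stmt5Aux

open Stmt5Aux in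
/-- `C(f_1, …, f_ℓ)` is spanned by its minimum weight codewords. -/
theorem stmt_5 (m ℓ : ℕ) (hm : 2 ≤ m) (hℓ1 : 1 ≤ ℓ) (hℓm : ℓ ≤ m)
    (f : Fin ℓ → GaloisField 2 (2*m) → ZMod 2) (hf : IsBentVectorial m ℓ f) :
    Submodule.span (ZMod 2)
        {c | c ∈ code m ℓ f ∧ wt m c = 2^(2*m-1) - 2^(m-1)} = code m ℓ f := by
  classical
  set Min : Set (GaloisField 2 (2*m) → ZMod 2) :=
    {c | c ∈ code m ℓ f ∧ wt m c = 2^(2*m-1) - 2^(m-1)} with hMin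
  -- basic membership facts for the code
  have htr_mem : ∀ w : Fq m, (fun x => tr m (w*x)) ∈ code m ℓ f := fun w =>
    Submodule.subset_span (Or.inl (Or.inr ⟨w, rfl⟩))
  have hone_mem : (fun _ => (1:ZMod 2)) ∈ code m ℓ f :=
    Submodule.subset_span (Or.inr rfl)
  have hf_mem : ∀ j, f j ∈ code m ℓ f := fun j =>
    Submodule.subset_span (Or.inl (Or.inl ⟨j, rfl⟩))
  -- every f j is bent
  have hbent : ∀ j, IsBent m (f j) := by
    intro j
    have h1 := hf (Pi.single j 1) (by
      intro h
      have h2 := congrFun h j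
      simp at h2)
    have h2 : (fun x => ∑ j', (Pi.single j 1 : Fin ℓ → ZMod 2) j' * f j' x) = f j := by
      funext x
      simp [Pi.single_apply, ite_mul]
    rwa [h2] at h1
  -- every "word" g + tr(w·) + e is in the code if g is
  have hword_mem : ∀ (g : Fq m → ZMod 2), g ∈ code m ℓ f → ∀ (w : Fq m) (e : ZMod 2),
      (fun x => g x + tr m (w*x) + e) ∈ code m ℓ f := by
    intro g hg w e
    have heq : (fun x => g x + tr m (w*x) + e)
        = g + (fun x => tr m (w*x)) + e • (fun _ => (1:ZMod 2)) := by
      funext x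
      simp [Pi.add_apply, Pi.smul_apply, smul_eq_mul]
    rw [heq]
    exact Submodule.add_mem _ (Submodule.add_mem _ hg (htr_mem w))
      (Submodule.smul_mem _ _ hone_mem)
  -- the canonical words are minimum weight codewords
  have hword_min : ∀ (g : Fq m → ZMod 2), IsBent m g → g ∈ code m ℓ f → ∀ w : Fq m,
      (fun x => g x + tr m (w*x) + eps m g w) ∈ Min := by
    intro g hgB hgC w
    refine ⟨hword_mem g hgC w _, ?_⟩
    exact wt_of_S hm _ (S_word hgB w)
  apply le_antisymm
  · rw [Submodule.span_le]
    intro c hc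
    exact hc.1
  · rw [code, Submodule.span_le]
    set M := Submodule.span (ZMod 2) Min with hM
    have hword_span : ∀ (g : Fq m → ZMod 2), IsBent m g → g ∈ code m ℓ f → ∀ w : Fq m,
        (fun x => g x + tr m (w*x) + eps m g w) ∈ M :=
      fun g hgB hgC w => Submodule.subset_span (hword_min g hgB hgC w)
    -- the all-one vector is in the span of minimum weight codewords
    have j0 : Fin ℓ := ⟨0, hℓ1⟩
    have hone_span : (fun _ => (1:ZMod 2)) ∈ M := by
      obtain ⟨w1, w2, w3, w4, hw, he⟩ := exists_quad hm (f j0) (hbent j0)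
      have heq : (fun _ => (1:ZMod 2))
          = (fun x => f j0 x + tr m (w1*x) + eps m (f j0) w1)
            + (fun x => f j0 x + tr m (w2*x) + eps m (f j0) w2)
            + (fun x => f j0 x + tr m (w3*x) + eps m (f j0) w3)
            + (fun x => f j0 x + tr m (w4*x) + eps m (f j0) w4) := by
        funext x
        have ht : tr m (w1*x) + tr m (w2*x) + tr m (w3*x) + tr m (w4*x) = 0 := by
          rw [← tr_add, ← tr_add, ← tr_add,
            show w1*x+w2*x+w3*x+w4*x = (w1+w2+w3+w4)*x by ring, hw, zero_mul, tr_zero]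
        exact (zmod2_four (f j0 x) _ _ _ _ _ _ _ _ ht he).symm
      rw [heq]
      exact Submodule.add_mem _ (Submodule.add_mem _ (Submodule.add_mem _
        (hword_span _ (hbent j0) (hf_mem j0) w1) (hword_span _ (hbent j0) (hf_mem j0) w2))
        (hword_span _ (hbent j0) (hf_mem j0) w3)) (hword_span _ (hbent j0) (hf_mem j0) w4)
    intro c hc
    rcases hc with (⟨j, rfl⟩ | ⟨w, rfl⟩) | rfl
    · -- c = f j
      have heq : f j = (fun x => f j x + tr m ((0:Fq m)*x) + eps m (f j) 0)
          + (eps m (f j) 0) • (fun _ => (1:ZMod 2)) := by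
        funext x
        simp only [Pi.add_apply, Pi.smul_apply, smul_eq_mul, mul_one, zero_mul, tr_zero]
        exact zmod2_fj (f j x) _
      rw [heq]
      exact Submodule.add_mem _ (hword_span _ (hbent j) (hf_mem j) 0)
        (Submodule.smul_mem _ _ hone_span)
    · -- c = tr(w·)
      show (fun x => tr m (w*x)) ∈ (M : Set _)
      have heq : (fun x => tr m (w*x))
          = (fun x => f j0 x + tr m (w*x) + eps m (f j0) w)
            + (fun x => f j0 x + tr m ((0:Fq m)*x) + eps m (f j0) 0)
            + (eps m (f j0) w + eps m (f j0) 0) • (fun _ => (1:ZMod 2)) := by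
        funext x
        simp only [Pi.add_apply, Pi.smul_apply, smul_eq_mul, mul_one, zero_mul, tr_zero]
        exact zmod2_tr (f j0 x) _ _ _
      rw [heq]
      exact Submodule.add_mem _ (Submodule.add_mem _
        (hword_span _ (hbent j0) (hf_mem j0) w) (hword_span _ (hbent j0) (hf_mem j0) 0))
        (Submodule.smul_mem _ _ hone_span)
    · -- c = all-one
      exact hone_span
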